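/- The function f(z) = 1/cosh(πz/2) satisfies, for every z in the horizontal strip S_{−1,1}, the integral representation 1/cosh(πz/2) = (1/π) ∫ℝ e^{−izt}/cosh t dt; moreover, for every integer n, f is positive definite on the horizontal strip S_{4n−1, 4n+1} and negative definite on the horizontal strip S_{4n+1, 4n+3}. -/

import Mathlib

open Complex MeasureTheory Filter Set Topology
open scoped Real BigOperators ComplexOrder

noncomputable section

/-- `f : ℝ → ℂ` is positive definite. -/
def IsPosDefFun (f : ℝ → ℂ) : Prop :=
  ∀ (n : ℕ) (x : Fin n → ℝ) (ξ : Fin n → ℂ),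
    0 ≤ ∑ k, ∑ l, f (x k - x l) * ξ k * (starRingEnd ℂ) (ξ l)

/-- `f` is positive definite on `S ⊆ ℂ`. -/
def IsPosDefOnC (f : ℂ → ℂ) (S : Set ℂ) : Prop :=
  ∀ (n : ℕ) (z : Fin n → ℂ), (∀ k l, z k - (starRingEnd ℂ) (z l) ∈ S) →
    ∀ ξ : Fin n → ℂ,
      0 ≤ ∑ k, ∑ l, f (z k - (starRingEnd ℂ) (z l)) * ξ k * (starRingEnd ℂ) (ξ l)

/-- `f` is co-positive definite on `T ⊆ ℂ`. -/
def IsCoPosDefOnC (f : ℂ → ℂ) (T : Set ℂ) : Prop :=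
  ∀ (n : ℕ) (z : Fin n → ℂ), (∀ k l, z k + (starRingEnd ℂ) (z l) ∈ T) →
    ∀ ξ : Fin n → ℂ,
      0 ≤ ∑ k, ∑ l, f (z k + (starRingEnd ℂ) (z l)) * ξ k * (starRingEnd ℂ) (ξ l)

/-- `G : ℝ → ℂ` is co-positive definite on `I ⊆ ℝ`. -/
def IsCoPosDefOnR (G : ℝ → ℂ) (I : Set ℝ) : Prop :=
  ∀ (n : ℕ) (x : Fin n → ℝ), (∀ k l, x k + x l ∈ I) →
    ∀ ξ : Fin n → ℂ,
      0 ≤ ∑ k, ∑ l, G (x k + x l) * ξ k * (starRingEnd ℂ) (ξ l)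

/-- Horizontal strip `S_{a,b}`. -/
def HStrip (a b : EReal) : Set ℂ := {z | a < (z.im : EReal) ∧ (z.im : EReal) < b}

/-- Vertical strip `T_{a,b}`. -/
def VStrip (a b : EReal) : Set ℂ := {z | a < (z.re : EReal) ∧ (z.re : EReal) < b}

/-- `μ` is exponentially finite with respect to the interval `(a,b)`. -/
def ExpFinite (μ : Measure ℝ) (a b : EReal) : Prop :=
  ∀ y : ℝ, a < (y : EReal) → (y : EReal) < b →
    Integrable (fun t : ℝ => Real.exp (-y * t)) μ

lemma integrableOn_exp_mul_Iic' {b : ℝ} (hb : 0 < b) :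
    IntegrableOn (fun t : ℝ => Real.exp (b * t)) (Iic (0:ℝ)) := by
  rw [integrableOn_Iic_iff_integrableOn_Iio]
  have h : IntegrableOn (fun t : ℝ => Real.exp (-b * t)) (Ioi (0:ℝ)) :=
    exp_neg_integrableOn_Ioi 0 hb
  have hmap : ((volume : Measure ℝ).restrict (Ioi (0:ℝ))).map Neg.neg
      = (volume : Measure ℝ).restrict (Iio 0) := by
    conv => rhs; rw [← Measure.map_neg_eq_self (volume : Measure ℝ),
      measurableEmbedding_neg.restrict_map]
    simp
  rw [IntegrableOn, ← hmap, measurableEmbedding_neg.integrable_map_iff]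
  refine h.congr_fun (fun t _ => ?_) measurableSet_Ioi
  simp only [Function.comp]
  ring_nf

lemma integrable_exp_mul_div_cosh {y : ℝ} (h1 : -1 < y) (h2 : y < 1) :
    Integrable (fun t : ℝ => Real.exp (y * t) / Real.cosh t) := by
  have hcont : Continuous fun t : ℝ => Real.exp (y * t) / Real.cosh t :=
    (Real.continuous_exp.comp (continuous_const.mul continuous_id)).div
      Real.continuous_cosh (fun t => (Real.cosh_pos t).ne')
  rw [← integrableOn_univ, ← Iic_union_Ioi (a := (0:ℝ)), integrableOn_union]
  constructor
  · have hb : 0 < 1 + y := by linarith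
    refine Integrable.mono' ((integrableOn_exp_mul_Iic' hb).const_mul 2)
      hcont.aestronglyMeasurable.restrict ?_
    filter_upwards [ae_restrict_mem measurableSet_Iic] with t ht
    rw [Real.norm_eq_abs, _root_.abs_of_nonneg (by positivity)]
    rw [div_le_iff₀ (Real.cosh_pos t)]
    have hc : Real.exp (-t) / 2 ≤ Real.cosh t := by
      rw [Real.cosh_eq]; have := Real.exp_pos t; linarith [Real.exp_pos (-t)]
    calc Real.exp (y * t) = (2 * Real.exp ((1+y) * t)) * (Real.exp (-t) / 2) := by
          rw [show (2:ℝ) * Real.exp ((1+y)*t) * (Real.exp (-t)/2)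
              = Real.exp ((1+y)*t) * Real.exp (-t) by ring, ← Real.exp_add]
          ring_nf
      _ ≤ (2 * Real.exp ((1+y) * t)) * Real.cosh t := by
          refine mul_le_mul_of_nonneg_left hc (by positivity)
  · have hb : 0 < 1 - y := by linarith
    refine Integrable.mono' (((exp_neg_integrableOn_Ioi 0 hb)).const_mul 2)
      hcont.aestronglyMeasurable.restrict ?_
    filter_upwards [ae_restrict_mem measurableSet_Ioi] with t ht
    rw [Real.norm_eq_abs, _root_.abs_of_nonneg (by positivity)]
    rw [div_le_iff₀ (Real.cosh_pos t)]
    have hc : Real.exp t / 2 ≤ Real.cosh t := by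
      rw [Real.cosh_eq]; have := Real.exp_pos (-t); linarith [Real.exp_pos t]
    calc Real.exp (y * t) = (2 * Real.exp (-(1-y) * t)) * (Real.exp t / 2) := by
          rw [show (2:ℝ) * Real.exp (-(1-y)*t) * (Real.exp t/2)
              = Real.exp (-(1-y)*t) * Real.exp t by ring, ← Real.exp_add]
          ring_nf
      _ ≤ (2 * Real.exp (-(1-y) * t)) * Real.cosh t := by
          refine mul_le_mul_of_nonneg_left hc (by positivity)

lemma phi_image : (fun t : ℝ => (1 + Real.exp (-2*t))⁻¹) '' univ = Ioo (0:ℝ) 1 := by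
  rw [image_univ]
  ext x
  simp only [mem_range, mem_Ioo]
  constructor
  · rintro ⟨t, rfl⟩
    have he := Real.exp_pos (-2*t)
    constructor
    · positivity
    · rw [inv_lt_one_iff₀]
      right; linarith
  · rintro ⟨hx0, hx1⟩
    have hx : 0 < x⁻¹ - 1 := by
      have : 1 < x⁻¹ := (one_lt_inv_iff₀).2 ⟨hx0, hx1⟩
      linarith
    refine ⟨-Real.log (x⁻¹ - 1)/2, ?_⟩
    rw [show -2 * (-Real.log (x⁻¹-1)/2) = Real.log (x⁻¹-1) by ring, Real.exp_log hx]
    rw [show 1 + (x⁻¹ - 1) = x⁻¹ by ring, inv_inv]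

lemma phi_mono : StrictMono (fun t : ℝ => (1 + Real.exp (-2*t))⁻¹) := by
  intro s t hst
  have h1 : Real.exp (-2*t) < Real.exp (-2*s) := Real.exp_lt_exp.2 (by linarith)
  have h2 : (0:ℝ) < 1 + Real.exp (-2*t) := by positivity
  exact inv_strictAnti₀ h2 (by linarith)

lemma phi_deriv (t : ℝ) :
    HasDerivAt (fun t : ℝ => (1 + Real.exp (-2*t))⁻¹)
      (2 * Real.exp (-2*t) / (1 + Real.exp (-2*t))^2) t := by
  have hg : HasDerivAt (fun t : ℝ => -2*t) (-2) t := by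
    simpa using (hasDerivAt_id t).const_mul (-2)
  have h1 : HasDerivAt (fun t : ℝ => 1 + Real.exp (-2*t)) (Real.exp (-2*t) * (-2)) t :=
    (hg.exp).const_add 1
  have h2 := h1.inv (by positivity)
  refine h2.congr_deriv ?_
  ring

lemma cpow_pos_real (r : ℝ) (hr : 0 < r) (w : ℂ) :
    (r:ℂ) ^ w = Complex.exp (w * (Real.log r : ℂ)) := by
  rw [Complex.cpow_def_of_ne_zero (Complex.ofReal_ne_zero.2 hr.ne'), ← Complex.ofReal_log hr.le,
    mul_comm]

lemma sech_real_identity (t : ℝ) :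
    2 * Real.exp (-2*t) / (1 + Real.exp (-2*t))^2 * (1 + Real.exp (-2*t)) * Real.exp t
      = 1 / Real.cosh t := by
  have hx := Real.exp_pos t
  have ha : Real.exp (-2*t) = (Real.exp t * Real.exp t)⁻¹ := by
    rw [← Real.exp_add, ← Real.exp_neg]; ring_nf
  rw [Real.cosh_eq, Real.exp_neg, ha]
  field_simp

lemma pointwise_eq (z : ℂ) (t : ℝ) :
    |2 * Real.exp (-2*t) / (1 + Real.exp (-2*t))^2| •
      (((((1 + Real.exp (-2*t))⁻¹ : ℝ) : ℂ)) ^ ((1 - I*z)/2 - 1) *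
        (1 - ((((1 + Real.exp (-2*t))⁻¹ : ℝ) : ℂ))) ^ ((1 + I*z)/2 - 1))
      = Complex.exp (-I * z * t) / (Real.cosh t : ℂ) := by
  have ha : (0:ℝ) < Real.exp (-2*t) := Real.exp_pos _
  set a := Real.exp (-2*t) with ha_def
  have hg : (0:ℝ) < 1 + a := by positivity
  have h1 : 1 - (((1 + a)⁻¹ : ℝ) : ℂ) = ((a/(1+a) : ℝ) : ℂ) := by
    push_cast
    field_simp
    ring
  rw [h1, cpow_pos_real _ (by positivity), cpow_pos_real _ (by positivity),
    ← Complex.exp_add, Complex.real_smul, abs_of_pos (by positivity)]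
  rw [Real.log_inv, Real.log_div ha.ne' hg.ne', Real.log_exp]
  set L := Real.log (1 + a) with hL_def
  have hexp : ((1 - I*z)/2 - 1) * (-L : ℝ) + ((1 + I*z)/2 - 1) * (((-2*t - L : ℝ)) : ℂ)
      = (L : ℝ) + (t : ℝ) + (-I * z * t) := by
    push_cast
    ring
  rw [hexp, Complex.exp_add, Complex.exp_add, ← Complex.ofReal_exp, ← Complex.ofReal_exp,
    Real.exp_log hg]
  have hfin : ((2*a/(1+a)^2 * (1+a) * Real.exp t : ℝ) : ℂ) = 1/(Real.cosh t : ℂ) := by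
    rw_mod_cast [sech_real_identity t]
  push_cast at hfin ⊢
  linear_combination Complex.exp (-I * z * (t:ℂ)) * hfin

lemma integral_sech_kernel (z : ℂ) (h1 : -1 < z.im) (h2 : z.im < 1) :
    ∫ t : ℝ, Complex.exp (-I * z * t) / (Real.cosh t : ℂ)
      = (π : ℂ) / Complex.cosh ((π:ℂ) * z / 2) := by
  have hu : 0 < ((1 - I*z)/2).re := by
    have : ((1 - I*z)/2).re = (1 + z.im)/2 := by simp [Complex.div_re, Complex.normSq]
    rw [this]; linarith
  have hv : 0 < ((1 + I*z)/2).re := by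
    have : ((1 + I*z)/2).re = (1 - z.im)/2 := by
      simp [Complex.div_re, Complex.normSq]; ring
    rw [this]; linarith
  have hderiv : ∀ x ∈ (univ : Set ℝ),
      HasDerivWithinAt (fun t : ℝ => (1 + Real.exp (-2*t))⁻¹)
        (2 * Real.exp (-2*x) / (1 + Real.exp (-2*x))^2) univ x :=
    fun x _ => (phi_deriv x).hasDerivWithinAt
  have hinj : InjOn (fun t : ℝ => (1 + Real.exp (-2*t))⁻¹) univ :=
    phi_mono.injective.injOn
  have hsub := integral_image_eq_integral_abs_deriv_smul MeasurableSet.univ hderiv hinj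
      (fun x : ℝ => (x:ℂ)^((1 - I*z)/2 - 1) * (1 - (x:ℂ))^((1 + I*z)/2 - 1))
  rw [phi_image] at hsub
  have e1 : ∫ t : ℝ, Complex.exp (-I * z * t) / (Real.cosh t : ℂ)
      = Complex.betaIntegral ((1 - I*z)/2) ((1 + I*z)/2) := by
    calc ∫ t : ℝ, Complex.exp (-I * z * t) / (Real.cosh t : ℂ)
        = ∫ t in (univ : Set ℝ), |2 * Real.exp (-2*t) / (1 + Real.exp (-2*t))^2| •
            ((((1 + Real.exp (-2*t))⁻¹ : ℝ) : ℂ) ^ ((1 - I*z)/2 - 1) *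
              (1 - (((1 + Real.exp (-2*t))⁻¹ : ℝ) : ℂ)) ^ ((1 + I*z)/2 - 1)) := by
          rw [setIntegral_univ]
          exact integral_congr_ae (Eventually.of_forall fun t => (pointwise_eq z t).symm)
      _ = ∫ x in Ioo (0:ℝ) 1,
            (x:ℂ)^((1 - I*z)/2 - 1) * (1 - (x:ℂ))^((1 + I*z)/2 - 1) := hsub.symm
      _ = ∫ x in Ioc (0:ℝ) 1,
            (x:ℂ)^((1 - I*z)/2 - 1) * (1 - (x:ℂ))^((1 + I*z)/2 - 1) :=
          (integral_Ioc_eq_integral_Ioo).symm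
      _ = Complex.betaIntegral ((1 - I*z)/2) ((1 + I*z)/2) := by
          rw [Complex.betaIntegral, intervalIntegral.integral_of_le zero_le_one]
  have hβ := Complex.Gamma_mul_Gamma_eq_betaIntegral hu hv
  rw [show (1 - I*z)/2 + (1 + I*z)/2 = 1 by ring, Complex.Gamma_one, one_mul] at hβ
  have hsin : Complex.sin ((π:ℂ) * ((1 - I*z)/2)) = Complex.cosh ((π:ℂ) * z / 2) := by
    rw [show (π:ℂ) * ((1 - I*z)/2) = (π:ℂ)/2 - ((π:ℂ) * z / 2) * I by ring,
      Complex.sin_pi_div_two_sub, Complex.cos_mul_I]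
  rw [e1, ← hβ, show (1 + I*z)/2 = 1 - (1 - I*z)/2 by ring,
    Complex.Gamma_mul_Gamma_one_sub, hsin]

lemma integrable_kernel (z : ℂ) (h1 : -1 < z.im) (h2 : z.im < 1) :
    Integrable (fun t : ℝ => Complex.exp (-I * z * t) / (Real.cosh t : ℂ)) := by
  have hcont : Continuous fun t : ℝ => Complex.exp (-I * z * t) / (Real.cosh t : ℂ) := by
    refine Continuous.div ?_ (Complex.continuous_ofReal.comp Real.continuous_cosh)
      (fun t => Complex.ofReal_ne_zero.2 (Real.cosh_pos t).ne')
    exact Complex.continuous_exp.comp (continuous_const.mul Complex.continuous_ofReal)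
  refine (integrable_exp_mul_div_cosh h1 h2).mono' hcont.aestronglyMeasurable ?_
  refine Eventually.of_forall fun t => le_of_eq ?_
  rw [norm_div, Complex.norm_exp, Complex.norm_real, Real.norm_eq_abs,
    _root_.abs_of_pos (Real.cosh_pos t)]
  congr 2
  simp [Complex.mul_re]

lemma one_div_cosh_eq (z : ℂ) (h1 : -1 < z.im) (h2 : z.im < 1) :
    1 / Complex.cosh ((π : ℂ) * z / 2) =
      (1 / (π : ℂ)) * ∫ t : ℝ, Complex.exp (-I * z * t) / (Real.cosh t : ℂ) := by
  rw [integral_sech_kernel z h1 h2, div_mul_div_comm, one_mul, div_mul_eq_div_div,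
    div_self (Complex.ofReal_ne_zero.2 Real.pi_ne_zero)]

lemma kernel_split (w₁ w₂ : ℂ) (t : ℝ) :
    Complex.exp (-I * (w₁ - (starRingEnd ℂ) w₂) * t)
      = Complex.exp (-I * w₁ * t) * (starRingEnd ℂ) (Complex.exp (-I * w₂ * t)) := by
  rw [← Complex.exp_conj, ← Complex.exp_add]
  congr 1
  rw [map_mul, map_mul, Complex.conj_ofReal, map_neg, Complex.conj_I]
  ring

lemma sum_factor (N : ℕ) (z : Fin N → ℂ) (ξ : Fin N → ℂ) (t : ℝ) :
    ∑ k, ∑ l, (1/(π:ℂ)) * (Complex.exp (-I * (z k - (starRingEnd ℂ) (z l)) * t) /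
        (Real.cosh t : ℂ)) * ξ k * (starRingEnd ℂ) (ξ l)
      = ((Complex.normSq (∑ k, ξ k * Complex.exp (-I * z k * t)) / (π * Real.cosh t) : ℝ) : ℂ) := by
  have h1 : ∀ k l : Fin N,
      (1/(π:ℂ)) * (Complex.exp (-I * (z k - (starRingEnd ℂ) (z l)) * t) /
          (Real.cosh t : ℂ)) * ξ k * (starRingEnd ℂ) (ξ l)
        = (ξ k * Complex.exp (-I * z k * t)) *
            (starRingEnd ℂ) (ξ l * Complex.exp (-I * z l * t)) *
            ((1/(π * Real.cosh t) : ℝ) : ℂ) := by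
    intro k l
    rw [kernel_split, map_mul]
    push_cast
    ring
  simp_rw [h1, ← Finset.sum_mul, ← Finset.mul_sum, ← Finset.sum_mul, ← map_sum]
  rw [Complex.mul_conj]
  push_cast
  ring

lemma posdef_base (N : ℕ) (z : Fin N → ℂ)
    (hz : ∀ k l, -1 < (z k - (starRingEnd ℂ) (z l)).im ∧ (z k - (starRingEnd ℂ) (z l)).im < 1)
    (ξ : Fin N → ℂ) :
    0 ≤ ∑ k, ∑ l, (1 / Complex.cosh ((π:ℂ) * (z k - (starRingEnd ℂ) (z l)) / 2)) *
        ξ k * (starRingEnd ℂ) (ξ l) := by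
  have hint : ∀ k l : Fin N, Integrable (fun t : ℝ =>
      (1/(π:ℂ)) * (Complex.exp (-I * (z k - (starRingEnd ℂ) (z l)) * t) /
        (Real.cosh t : ℂ)) * ξ k * (starRingEnd ℂ) (ξ l)) := by
    intro k l
    exact (((integrable_kernel _ (hz k l).1 (hz k l).2).const_mul
      (1/(π:ℂ))).mul_const (ξ k)).mul_const ((starRingEnd ℂ) (ξ l))
  have hterm : ∀ k l : Fin N,
      (1 / Complex.cosh ((π:ℂ) * (z k - (starRingEnd ℂ) (z l)) / 2)) * ξ k * (starRingEnd ℂ) (ξ l)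
        = ∫ t : ℝ, (1/(π:ℂ)) * (Complex.exp (-I * (z k - (starRingEnd ℂ) (z l)) * t) /
            (Real.cosh t : ℂ)) * ξ k * (starRingEnd ℂ) (ξ l) := by
    intro k l
    rw [one_div_cosh_eq _ (hz k l).1 (hz k l).2, MeasureTheory.integral_mul_const,
      MeasureTheory.integral_mul_const, MeasureTheory.integral_const_mul]
  simp_rw [hterm]
  rw [show (∑ k, ∑ l, ∫ t : ℝ, (1/(π:ℂ)) *
      (Complex.exp (-I * (z k - (starRingEnd ℂ) (z l)) * t) / (Real.cosh t : ℂ)) *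
      ξ k * (starRingEnd ℂ) (ξ l))
    = ∫ t : ℝ, ∑ k, ∑ l, (1/(π:ℂ)) *
      (Complex.exp (-I * (z k - (starRingEnd ℂ) (z l)) * t) / (Real.cosh t : ℂ)) *
      ξ k * (starRingEnd ℂ) (ξ l) by
      rw [MeasureTheory.integral_finset_sum _ (fun k _ => integrable_finset_sum _
        (fun l _ => hint k l))]
      exact Finset.sum_congr rfl fun k _ =>
        (MeasureTheory.integral_finset_sum _ (fun l _ => hint k l)).symm]
  simp_rw [sum_factor]
  have h2 := integral_ofReal (𝕜 := ℂ) (μ := (volume : Measure ℝ))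
    (f := fun t => Complex.normSq (∑ k, ξ k * Complex.exp (-I * z k * t)) / (π * Real.cosh t))
  norm_num at h2
  push_cast
  simp only [neg_mul]
  rw [h2]
  refine Complex.zero_le_real.2 ?_
  refine integral_nonneg fun t => ?_
  have h3 := Complex.normSq_nonneg (∑ k, ξ k * Complex.exp (-(I * z k * t)))
  have h4 := Real.cosh_pos t
  have h5 : (0:ℝ) < π := Real.pi_pos
  positivity

lemma cosh_shift (ζ : ℂ) (n : ℤ) :
    Complex.cosh ((π:ℂ) * (ζ + 4*(n:ℂ)*I)/2) = Complex.cosh ((π:ℂ) * ζ/2) := by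
  have h : (π:ℂ) * (ζ + 4*(n:ℂ)*I)/2 = (π:ℂ)*ζ/2 + ((n:ℂ)*(2*(π:ℂ)))*I := by ring
  have hs : Complex.sin ((n:ℂ)*(2*(π:ℂ))) = 0 := by
    rw [show (n:ℂ)*(2*(π:ℂ)) = (0:ℂ) + (n:ℂ)*(2*(π:ℂ)) by ring,
      Complex.sin_add_int_mul_two_pi, Complex.sin_zero]
  rw [h, Complex.cosh_add, Complex.cosh_mul_I, Complex.sinh_mul_I,
    Complex.cos_int_mul_two_pi, hs]
  ring

lemma cosh_flip (ζ : ℂ) :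
    Complex.cosh ((π:ℂ) * (ζ + 2*I)/2) = -Complex.cosh ((π:ℂ) * ζ/2) := by
  have h : (π:ℂ) * (ζ + 2*I)/2 = (π:ℂ)*ζ/2 + (π:ℂ)*I := by ring
  rw [h, Complex.cosh_add, Complex.cosh_mul_I, Complex.sinh_mul_I,
    Complex.cos_pi, Complex.sin_pi]
  ring

lemma strip_mem_iff {a b : ℝ} {w : ℂ} :
    w ∈ HStrip ((a:ℝ):EReal) ((b:ℝ):EReal) ↔ a < w.im ∧ w.im < b := by
  simp only [HStrip, Set.mem_setOf_eq, EReal.coe_lt_coe_iff]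

theorem stmt13 :
    (∀ z ∈ HStrip (-1) 1,
      1 / Complex.cosh ((π : ℂ) * z / 2) =
        (1 / (π : ℂ)) * ∫ t : ℝ, Complex.exp (-I * z * t) / (Real.cosh t : ℂ)) ∧
    (∀ n : ℤ,
      IsPosDefOnC (fun z => 1 / Complex.cosh ((π : ℂ) * z / 2))
        (HStrip (((4 * n - 1 : ℤ) : ℝ) : EReal) (((4 * n + 1 : ℤ) : ℝ) : EReal)) ∧
      IsPosDefOnC (fun z => -(1 / Complex.cosh ((π : ℂ) * z / 2)))
        (HStrip (((4 * n + 1 : ℤ) : ℝ) : EReal) (((4 * n + 3 : ℤ) : ℝ) : EReal))) := by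
  constructor
  · intro w hw
    obtain ⟨hw1, hw2⟩ := hw
    have h1 : (-1:ℝ) < w.im := by
      have : ((-1:ℝ):EReal) < (w.im : EReal) := by
        rw [show ((-1:ℝ):EReal) = (-1:EReal) by simp]
        exact hw1
      exact_mod_cast this
    have h2 : w.im < 1 := by
      have : (w.im : EReal) < ((1:ℝ):EReal) := by
        rw [show ((1:ℝ):EReal) = (1:EReal) by simp]
        exact hw2
      exact_mod_cast this
    exact one_div_cosh_eq w h1 h2
  · intro n
    constructor
    · intro N zf hzf ξ
      set z' : Fin N → ℂ := fun k => zf k - 2*(n:ℂ)*I with hz'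
      have hkey : ∀ k l, zf k - (starRingEnd ℂ) (zf l)
          = (z' k - (starRingEnd ℂ) (z' l)) + 4*(n:ℂ)*I := by
        intro k l
        simp only [hz', map_sub, map_mul, Complex.conj_I, map_ofNat, map_intCast]
        ring
      have him : ∀ k l, -1 < (z' k - (starRingEnd ℂ) (z' l)).im ∧
          (z' k - (starRingEnd ℂ) (z' l)).im < 1 := by
        intro k l
        have hm := (strip_mem_iff).1 (hzf k l)
        have he : (zf k - (starRingEnd ℂ) (zf l)).im
            = (z' k - (starRingEnd ℂ) (z' l)).im + 4*(n:ℝ) := by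
          rw [hkey k l]
          simp
        rw [he] at hm
        push_cast at hm
        constructor <;> linarith [hm.1, hm.2]
      have hterm : ∀ k l : Fin N,
          1/Complex.cosh ((π:ℂ)*(zf k - (starRingEnd ℂ) (zf l))/2)
            = 1/Complex.cosh ((π:ℂ)*(z' k - (starRingEnd ℂ) (z' l))/2) := by
        intro k l
        rw [hkey k l, cosh_shift]
      simp only []
      simp_rw [hterm]
      exact posdef_base N z' him ξ
    · intro N zf hzf ξ
      set z' : Fin N → ℂ := fun k => zf k - (2*(n:ℂ)+1)*I with hz'
      have hkey : ∀ k l, zf k - (starRingEnd ℂ) (zf l)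
          = ((z' k - (starRingEnd ℂ) (z' l)) + 2*I) + 4*(n:ℂ)*I := by
        intro k l
        simp only [hz', map_sub, map_mul, map_add, map_one, Complex.conj_I, map_ofNat,
          map_intCast]
        ring
      have him : ∀ k l, -1 < (z' k - (starRingEnd ℂ) (z' l)).im ∧
          (z' k - (starRingEnd ℂ) (z' l)).im < 1 := by
        intro k l
        have hm := (strip_mem_iff).1 (hzf k l)
        have he : (zf k - (starRingEnd ℂ) (zf l)).im
            = (z' k - (starRingEnd ℂ) (z' l)).im + (4*(n:ℝ) + 2) := by
          rw [hkey k l]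
          simp
          ring
        rw [he] at hm
        push_cast at hm
        constructor <;> linarith [hm.1, hm.2]
      have hterm : ∀ k l : Fin N,
          -(1/Complex.cosh ((π:ℂ)*(zf k - (starRingEnd ℂ) (zf l))/2))
            = 1/Complex.cosh ((π:ℂ)*(z' k - (starRingEnd ℂ) (z' l))/2) := by
        intro k l
        rw [hkey k l, cosh_shift ((z' k - (starRingEnd ℂ) (z' l)) + 2*I) n,
          cosh_flip (z' k - (starRingEnd ℂ) (z' l)), div_neg, neg_neg]
      simp only []
      simp_rw [hterm]
      exact posdef_base N z' him ξ
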